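/- Let (Ω, μ) be a probability space, ε > 0 a real number, n a natural number, I : Fin n → Ω → ℝ a family of integrable functions with 0 ≤ I i ω for all i and ω and ∫ I i dμ ≤ ε² / (Real.exp 1)² for every i, and w : Fin n → ℝ with w i ≥ 0 for all i. Set W = ∑ i, w i and, for a real number w₀, define the estimate ŵ(ω) = w₀ + ∑ i, w i · I i ω. Then μ {ω | ŵ ω > w₀ + ε² · W / Real.exp 1} ≤ (Real.exp 1)⁻¹; equivalently, ŵ ≤ w₀ + ε²·W/e holds with probability at least 1 - e⁻¹. -/

import Mathlib

open MeasureTheory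

/-- Theorem 3 of the HIGGS paper (error bound for edge queries): if each nonnegative
collision indicator `I i` has expectation at most `ε²/e²` and the weights are
nonnegative with total `W`, then the estimate `wEst ω = w₀ + ∑ i, w i · I i ω`
exceeds `w₀ + ε²·W/e` with probability at most `e⁻¹`. -/
theorem edge_query_error_bound {Ω : Type*} [MeasurableSpace Ω]
    (μ : Measure Ω) [IsProbabilityMeasure μ] (ε : ℝ) (hε : 0 < ε) (n : ℕ)
    (I : Fin n → Ω → ℝ) (hint : ∀ i, Integrable (I i) μ)
    (hnonneg : ∀ i ω, 0 ≤ I i ω)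
    (hexp : ∀ i, ∫ ω, I i ω ∂μ ≤ ε ^ 2 / (Real.exp 1) ^ 2)
    (w : Fin n → ℝ) (hw : ∀ i, 0 ≤ w i) (W : ℝ) (hW : W = ∑ i, w i)
    (w₀ : ℝ) (wEst : Ω → ℝ) (hwEst : ∀ ω, wEst ω = w₀ + ∑ i, w i * I i ω) :
    μ {ω | wEst ω > w₀ + ε ^ 2 * W / Real.exp 1} ≤ ENNReal.ofReal (Real.exp 1)⁻¹ := by
  have he : 0 < Real.exp 1 := Real.exp_pos 1
  set S : Ω → ℝ := fun ω => ∑ i, w i * I i ω with hS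
  have hSint : Integrable S μ := integrable_finset_sum _ (fun i _ => (hint i).const_mul _)
  have hSnonneg : ∀ ω, 0 ≤ S ω := fun ω =>
    Finset.sum_nonneg (fun i _ => mul_nonneg (hw i) (hnonneg i ω))
  have hWnn : 0 ≤ W := hW ▸ Finset.sum_nonneg (fun i _ => hw i)
  have hSexp : ∫ ω, S ω ∂μ ≤ ε ^ 2 / (Real.exp 1) ^ 2 * W := by
    rw [hS, integral_finset_sum _ (fun i _ => (hint i).const_mul _), hW,
      Finset.mul_sum]
    apply Finset.sum_le_sum
    intro i _
    rw [integral_const_mul, mul_comm (ε ^ 2 / Real.exp 1 ^ 2)]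
    exact mul_le_mul_of_nonneg_left (hexp i) (hw i)
  rcases eq_or_lt_of_le hWnn with hW0 | hWpos
  · have : {ω | wEst ω > w₀ + ε ^ 2 * W / Real.exp 1} = ∅ := by
      ext ω
      simp only [Set.mem_setOf_eq, Set.mem_empty_iff_false, iff_false, not_lt, hwEst]
      have hall : ∀ i ∈ Finset.univ, w i = 0 := by
        intro i _
        have := (Finset.sum_eq_zero_iff_of_nonneg (fun i _ => hw i)).mp (hW ▸ hW0.symm)
        exact this i (Finset.mem_univ i)
      have : S ω = 0 := Finset.sum_eq_zero (fun i hi => by rw [hall i hi, zero_mul])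
      simp only [← hW0, mul_zero, zero_div, add_zero, add_le_iff_nonpos_right]
      exact this.le
    rw [this]
    simp
  · set t : ℝ := ε ^ 2 * W / Real.exp 1 with ht
    have htpos : 0 < t := by positivity
    have hsub : {ω | wEst ω > w₀ + t} ⊆ {ω | t ≤ S ω} := by
      intro ω hω
      simp only [Set.mem_setOf_eq, hwEst] at hω ⊢
      linarith
    have hmarkov := mul_meas_ge_le_integral_of_nonneg
      (Filter.Eventually.of_forall hSnonneg) hSint t
    have hμ : μ {ω | wEst ω > w₀ + t} ≤ μ {ω | t ≤ S ω} := measure_mono hsub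
    have hbig : t * (μ {ω | t ≤ S ω}).toReal ≤ ε ^ 2 / (Real.exp 1) ^ 2 * W :=
      hmarkov.trans hSexp
    have hfinal : μ {ω | t ≤ S ω} ≤ ENNReal.ofReal (Real.exp 1)⁻¹ := by
      have hfin : μ {ω | t ≤ S ω} ≠ ⊤ := measure_ne_top _ _
      rw [← ENNReal.ofReal_toReal hfin]
      apply ENNReal.ofReal_le_ofReal
      have hm : (μ {ω | t ≤ S ω}).toReal ≤ (ε ^ 2 / (Real.exp 1) ^ 2 * W) / t := by
        rw [le_div_iff₀ htpos]; linarith [hbig]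
      refine hm.trans (le_of_eq ?_)
      rw [ht]
      field_simp
    exact hμ.trans hfinal
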